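/- arXiv:2012.03558 — 7 statements merged into one kernel-verified Lean document; each statement's English description precedes it below -/
import Mathlib

section
/- There exist an infra-topological space (X, τ) and a subset A ⊆ X such that iInt(A) = A but A is not infra-open (equivalently, A is not i-genuine). -/
def IsInfraTop {X : Type*} (τ : Set (Set X)) : Prop :=
  ∅ ∈ τ ∧ Set.univ ∈ τ ∧ ∀ A B : Set X, A ∈ τ → B ∈ τ → A ∩ B ∈ τ

def iInt {X : Type*} (τ : Set (Set X)) (A : Set X) : Set X :=
  ⋃₀ {O | O ∈ τ ∧ O ⊆ A}

def IGenuine {X : Type*} (τ : Set (Set X)) (A : Set X) : Prop :=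
  iInt τ A ∈ τ

def InfraClosed {X : Type*} (τ : Set (Set X)) (C : Set X) : Prop :=
  Cᶜ ∈ τ

def iCl {X : Type*} (τ : Set (Set X)) (A : Set X) : Set X :=
  ⋂₀ {C | InfraClosed τ C ∧ A ⊆ C}

def CGenuine {X : Type*} (τ : Set (Set X)) (A : Set X) : Prop :=
  InfraClosed τ (iCl τ A)

theorem stmt6 : ∃ (X : Type) (τ : Set (Set X)) (A : Set X),
    IsInfraTop τ ∧ iInt τ A = A ∧ A ∉ τ ∧ ¬ IGenuine τ A := by
  have hint : iInt ({∅, Set.univ, {0}, {1}} : Set (Set (Fin 3))) {0, 1} = {0, 1} := by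
    apply subset_antisymm
    · rintro x ⟨O, ⟨_, hO⟩, hx⟩; exact hO hx
    · rintro x (rfl|rfl)
      · exact ⟨{0}, ⟨by simp, by intro y hy; simp at hy; simp [hy]⟩, rfl⟩
      · exact ⟨{1}, ⟨by simp, by intro y hy; simp at hy; simp [hy]⟩, rfl⟩
  have hA : ({0, 1} : Set (Fin 3)) ∉ ({∅, Set.univ, {0}, {1}} : Set (Set (Fin 3))) := by
    rintro (h|h|h|h)
    · exact absurd (h ▸ (by simp : (0:Fin 3) ∈ ({0,1} : Set (Fin 3)))) (by simp)
    · have : (2:Fin 3) ∈ ({0,1} : Set (Fin 3)) := h ▸ Set.mem_univ _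
      simp at this
    · have : (1:Fin 3) ∈ ({0} : Set (Fin 3)) := h ▸ (by simp)
      simp at this
    · have : (0:Fin 3) ∈ ({1} : Set (Fin 3)) := h ▸ (by simp)
      simp at this
  refine ⟨Fin 3, {∅, Set.univ, {0}, {1}}, {0, 1}, ?_, hint, hA, ?_⟩
  · refine ⟨by simp, by simp, ?_⟩
    rintro A B (rfl|rfl|rfl|rfl) (rfl|rfl|rfl|rfl) <;> simp <;>
      first
        | (left; ext x; simp; intro h h'; simp [h] at h'; exact absurd h'.symm (by decide))
        | (right; tauto)
  · intro hg
    exact hA (hint ▸ hg)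
end

section
/- There exist an infra-topological space (X, τ) and i-genuine sets A, B ⊆ X such that A ∪ B is not i-genuine. -/
namespace Stmt7Aux

def τ : Set (Set (Fin 3)) := {∅, Set.univ, {0}, {1}}

lemma iInt_self {A : Set (Fin 3)} (h : A ∈ τ) : iInt τ A = A := by
  apply subset_antisymm
  · intro x hx
    obtain ⟨O, ⟨_, hOA⟩, hxO⟩ := hx
    exact hOA hxO
  · intro x hx
    exact ⟨A, ⟨h, subset_rfl⟩, hx⟩

lemma iInt_union : iInt τ ({0} ∪ {1} : Set (Fin 3)) = {0, 1} := by
  apply subset_antisymm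
  · intro x hx
    obtain ⟨O, ⟨hO, hOA⟩, hxO⟩ := hx
    rcases hO with rfl | rfl | rfl | rfl
    · exact absurd hxO (by simp)
    · exact absurd (hOA (Set.mem_univ 2)) (by decide)
    · exact Or.inl hxO
    · exact Or.inr hxO
  · rintro x (rfl | rfl)
    · exact ⟨{0}, ⟨by simp [τ], by simp⟩, rfl⟩
    · exact ⟨{1}, ⟨by simp [τ], by simp⟩, rfl⟩

end Stmt7Aux

theorem stmt7 : ∃ (X : Type) (τ : Set (Set X)) (A B : Set X),
    IsInfraTop τ ∧ IGenuine τ A ∧ IGenuine τ B ∧ ¬ IGenuine τ (A ∪ B) := by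
  refine ⟨Fin 3, Stmt7Aux.τ, {0}, {1}, ⟨?_, ?_, ?_⟩, ?_, ?_, ?_⟩
  · simp [Stmt7Aux.τ]
  · simp [Stmt7Aux.τ]
  · intro A B hA hB
    rcases hA with rfl | rfl | rfl | rfl <;> rcases hB with rfl | rfl | rfl | rfl <;>
      simp [Stmt7Aux.τ] <;> first
        | (left; ext x; simp; omega)
        | (right; right; ext x; simp)
        | skip
  · unfold IGenuine
    rw [Stmt7Aux.iInt_self (by simp [Stmt7Aux.τ])]
    simp [Stmt7Aux.τ]
  · unfold IGenuine
    rw [Stmt7Aux.iInt_self (by simp [Stmt7Aux.τ])]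
    simp [Stmt7Aux.τ]
  · unfold IGenuine
    rw [Stmt7Aux.iInt_union]
    intro h
    rcases h with h | h | h | h
    · have : (0 : Fin 3) ∈ (∅ : Set (Fin 3)) := by rw [← h]; simp
      exact this
    · have : (2 : Fin 3) ∈ ({0,1} : Set (Fin 3)) := h ▸ Set.mem_univ 2
      revert this; decide
    · have : (1 : Fin 3) ∈ ({0} : Set (Fin 3)) := h ▸ (by simp)
      revert this; decide
    · have : (0 : Fin 3) ∈ ({1} : Set (Fin 3)) := h ▸ (by simp)
      revert this; decide
end

section
/- In an infra-topological space (X, τ), the intersection of two i-genuine sets is i-genuine; hence the family of i-genuine sets is itself an infra-topology on X, finer than τ. -/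
lemma iInt_subset {X : Type*} (τ : Set (Set X)) (A : Set X) : iInt τ A ⊆ A := by
  intro x hx
  obtain ⟨O, ⟨_, hOA⟩, hxO⟩ := hx
  exact hOA hxO

lemma subset_iInt {X : Type*} (τ : Set (Set X)) {O A : Set X} (hO : O ∈ τ) (hOA : O ⊆ A) :
    O ⊆ iInt τ A := fun x hx => ⟨O, ⟨hO, hOA⟩, hx⟩

lemma mem_iff_iInt_eq {X : Type*} (τ : Set (Set X)) {A : Set X} (hA : A ∈ τ) :
    iInt τ A = A :=
  Set.Subset.antisymm (iInt_subset τ A) (subset_iInt τ hA subset_rfl)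

theorem stmt8 {X : Type*} (τ : Set (Set X)) (hτ : IsInfraTop τ) :
    (∀ A B : Set X, IGenuine τ A → IGenuine τ B → IGenuine τ (A ∩ B)) ∧
    IsInfraTop {A : Set X | IGenuine τ A} ∧
    τ ⊆ {A : Set X | IGenuine τ A} := by
  obtain ⟨h0, h1, h2⟩ := hτ
  have hsub : ∀ A ∈ τ, IGenuine τ A := by
    intro A hA
    unfold IGenuine
    rw [mem_iff_iInt_eq τ hA]
    exact hA
  have hinter : ∀ A B : Set X, IGenuine τ A → IGenuine τ B → IGenuine τ (A ∩ B) := by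
    intro A B hA hB
    have key : iInt τ (A ∩ B) = iInt τ A ∩ iInt τ B := by
      apply Set.Subset.antisymm
      · intro x hx
        obtain ⟨O, ⟨hO, hOA⟩, hxO⟩ := hx
        exact ⟨subset_iInt τ hO (fun y hy => (hOA hy).1) hxO,
               subset_iInt τ hO (fun y hy => (hOA hy).2) hxO⟩
      · apply subset_iInt τ (h2 _ _ hA hB)
        exact Set.inter_subset_inter (iInt_subset τ A) (iInt_subset τ B)
    unfold IGenuine
    rw [key]
    exact h2 _ _ hA hB
  exact ⟨hinter, ⟨hsub ∅ h0, hsub Set.univ h1, hinter⟩, fun A hA => hsub A hA⟩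
end

section
/- There exist an infra-topological space (X, τ) and non-i-genuine sets A, B ⊆ X such that A ∪ B is i-genuine. -/
namespace Stmt9Aux

def τ : Set (Set (Fin 3)) := {∅, Set.univ, {0}, {1}, {2}}

lemma iInt_subset (A : Set (Fin 3)) : iInt τ A ⊆ A := by
  intro x hx
  obtain ⟨O, ⟨_, hOA⟩, hxO⟩ := hx
  exact hOA hxO

lemma mem_iInt {A O : Set (Fin 3)} (hO : O ∈ τ) (hOA : O ⊆ A) : O ⊆ iInt τ A :=
  fun x hx => ⟨O, ⟨hO, hOA⟩, hx⟩

lemma iInt_A : iInt τ ({0, 1} : Set (Fin 3)) = {0, 1} := by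
  apply Set.Subset.antisymm (iInt_subset _)
  intro x hx
  rcases hx with h | h <;> subst h
  · exact mem_iInt (O := {0}) (by right; right; left; rfl) (by intro y hy; left; exact hy) rfl
  · exact mem_iInt (O := {1}) (by right; right; right; left; rfl) (by intro y hy; right; exact hy) rfl

lemma iInt_B : iInt τ ({1, 2} : Set (Fin 3)) = {1, 2} := by
  apply Set.Subset.antisymm (iInt_subset _)
  intro x hx
  rcases hx with h | h <;> subst h
  · exact mem_iInt (O := {1}) (by right; right; right; left; rfl) (by intro y hy; left; exact hy) rfl
  · exact mem_iInt (O := {2}) (by right; right; right; right; rfl) (by intro y hy; right; exact hy) rfl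

lemma A_not_mem : ({0, 1} : Set (Fin 3)) ∉ τ := by
  intro h
  rcases h with h | h | h | h | h
  · have := Set.ext_iff.mp h 0; simp at this
  · have := Set.ext_iff.mp h 2; simp at this
  · have := Set.ext_iff.mp h 1; simp at this
  · have := Set.ext_iff.mp h 0; simp at this
  · have := Set.ext_iff.mp h 0; simp at this

lemma B_not_mem : ({1, 2} : Set (Fin 3)) ∉ τ := by
  intro h
  rcases h with h | h | h | h | h
  · have := Set.ext_iff.mp h 1; simp at this
  · have := Set.ext_iff.mp h 0; simp at this
  · have := Set.ext_iff.mp h 1; simp at this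
  · have := Set.ext_iff.mp h 2; simp at this
  · have := Set.ext_iff.mp h 1; simp at this

lemma union_eq : ({0, 1} : Set (Fin 3)) ∪ {1, 2} = Set.univ := by
  ext x; simp; fin_cases x <;> simp

lemma iInt_univ : iInt τ (Set.univ : Set (Fin 3)) = Set.univ := by
  apply Set.Subset.antisymm (iInt_subset _)
  exact mem_iInt (by right; left; rfl) (Set.subset_univ _)

lemma sing_inter (a b : Fin 3) : ({a} : Set (Fin 3)) ∩ {b} ∈ τ := by
  by_cases hab : a = b
  · subst hab
    rw [Set.inter_self]
    fin_cases a
    · exact Or.inr (Or.inr (Or.inl rfl))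
    · exact Or.inr (Or.inr (Or.inr (Or.inl rfl)))
    · exact Or.inr (Or.inr (Or.inr (Or.inr rfl)))
  · have : ({a} : Set (Fin 3)) ∩ {b} = ∅ := by
      ext x; simp; rintro rfl; exact hab
    rw [this]; exact Or.inl rfl

lemma isInfra : IsInfraTop τ := by
  refine ⟨Or.inl rfl, Or.inr (Or.inl rfl), ?_⟩
  intro A B hA hB
  rcases hA with h | h | h | h | h <;> subst h
  · left; simp
  · simpa using hB
  all_goals rcases hB with h | h | h | h | h <;> subst h
  all_goals try simp only [Set.inter_univ, Set.inter_empty]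
  all_goals first
    | exact Or.inl rfl
    | exact Or.inr (Or.inr (Or.inl rfl))
    | exact Or.inr (Or.inr (Or.inr (Or.inl rfl)))
    | exact Or.inr (Or.inr (Or.inr (Or.inr rfl)))
    | exact sing_inter _ _

end Stmt9Aux

theorem stmt9 : ∃ (X : Type) (τ : Set (Set X)) (A B : Set X),
    IsInfraTop τ ∧ ¬ IGenuine τ A ∧ ¬ IGenuine τ B ∧ IGenuine τ (A ∪ B) := by
  refine ⟨Fin 3, Stmt9Aux.τ, {0, 1}, {1, 2}, Stmt9Aux.isInfra, ?_, ?_, ?_⟩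
  · unfold IGenuine; rw [Stmt9Aux.iInt_A]; exact Stmt9Aux.A_not_mem
  · unfold IGenuine; rw [Stmt9Aux.iInt_B]; exact Stmt9Aux.B_not_mem
  · unfold IGenuine; rw [Stmt9Aux.union_eq, Stmt9Aux.iInt_univ]
    right; left; rfl
end

section
/- In an infra-topological space (X, τ), the family of ps-infra-open sets is a topology on X: it contains ∅ and X, is closed under binary intersections, and is closed under arbitrary unions. -/
theorem stmt10 {X : Type*} (τ : Set (Set X)) (hτ : IsInfraTop τ) :
    iInt τ (∅ : Set X) = ∅ ∧ iInt τ (Set.univ : Set X) = Set.univ ∧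
    (∀ A B : Set X, iInt τ A = A → iInt τ B = B → iInt τ (A ∩ B) = A ∩ B) ∧
    (∀ 𝒜 : Set (Set X), (∀ A ∈ 𝒜, iInt τ A = A) → iInt τ (⋃₀ 𝒜) = ⋃₀ 𝒜) := by
  obtain ⟨h0, hu, hi⟩ := hτ
  refine ⟨Set.Subset.antisymm (iInt_subset τ _) (Set.empty_subset _),
    Set.Subset.antisymm (iInt_subset τ _)
      (fun x _ => ⟨Set.univ, ⟨hu, le_refl _⟩, trivial⟩), ?_, ?_⟩
  · intro A B hA hB
    refine Set.Subset.antisymm (iInt_subset τ _) ?_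
    rintro x ⟨hxA, hxB⟩
    rw [← hA] at hxA; rw [← hB] at hxB
    obtain ⟨O, ⟨hO, hOA⟩, hxO⟩ := hxA
    obtain ⟨P, ⟨hP, hPB⟩, hxP⟩ := hxB
    exact ⟨O ∩ P, ⟨hi O P hO hP, Set.inter_subset_inter hOA hPB⟩, hxO, hxP⟩
  · intro 𝒜 h
    refine Set.Subset.antisymm (iInt_subset τ _) ?_
    rintro x ⟨A, hA𝒜, hxA⟩
    rw [← h A hA𝒜] at hxA
    obtain ⟨O, ⟨hO, hOA⟩, hxO⟩ := hxA
    exact ⟨O, ⟨hO, hOA.trans (Set.subset_sUnion_of_mem hA𝒜)⟩, hxO⟩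
end

section
/- In an infra-topological space (X, τ), for all A, B ⊆ X one has iCl(A ∪ B) = iCl(A) ∪ iCl(B). -/
theorem stmt15 {X : Type*} (τ : Set (Set X)) (hτ : IsInfraTop τ)
    (A B : Set X) : iCl τ (A ∪ B) = iCl τ A ∪ iCl τ B := by
  apply Set.Subset.antisymm
  · intro x hx
    by_contra h
    rw [Set.mem_union] at h
    push_neg at h
    obtain ⟨hA, hB⟩ := h
    simp only [iCl, Set.mem_sInter, Set.mem_setOf_eq, not_forall] at hA hB
    obtain ⟨C, ⟨hC, hAC⟩, hxC⟩ := hA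
    obtain ⟨D, ⟨hD, hBD⟩, hxD⟩ := hB
    have : x ∈ C ∪ D := by
      apply hx
      refine ⟨?_, Set.union_subset_union hAC hBD⟩
      unfold InfraClosed at *
      rw [Set.compl_union]
      exact hτ.2.2 _ _ hC hD
    rcases this with h | h <;> [exact hxC h; exact hxD h]
  · apply Set.union_subset
    · exact fun x hx C hC => hx _ ⟨hC.1, Set.subset_union_left.trans hC.2⟩
    · exact fun x hx C hC => hx _ ⟨hC.1, Set.subset_union_right.trans hC.2⟩
end

section
/- In an infra-topological space (X, τ), if A and B are c-genuine, then A ∪ B is c-genuine, and iCl(A ∪ B) = iCl(A) ∪ iCl(B) is the smallest infra-closed set containing A ∪ B. -/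
lemma iCl_subset {X : Type*} (τ : Set (Set X)) (A C : Set X)
    (hC : InfraClosed τ C) (hAC : A ⊆ C) : iCl τ A ⊆ C :=
  Set.sInter_subset_of_mem ⟨hC, hAC⟩

lemma subset_iCl {X : Type*} (τ : Set (Set X)) (A : Set X) : A ⊆ iCl τ A :=
  fun x hx C hC => hC.2 hx

theorem stmt17 {X : Type*} (τ : Set (Set X)) (hτ : IsInfraTop τ)
    (A B : Set X) (hA : CGenuine τ A) (hB : CGenuine τ B) :
    CGenuine τ (A ∪ B) ∧ iCl τ (A ∪ B) = iCl τ A ∪ iCl τ B ∧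
    InfraClosed τ (iCl τ (A ∪ B)) ∧ A ∪ B ⊆ iCl τ (A ∪ B) ∧
    ∀ C : Set X, InfraClosed τ C → A ∪ B ⊆ C → iCl τ (A ∪ B) ⊆ C := by
  have hU : InfraClosed τ (iCl τ A ∪ iCl τ B) := by
    unfold InfraClosed at *
    rw [Set.compl_union]
    exact hτ.2.2 _ _ hA hB
  have hsub : A ∪ B ⊆ iCl τ A ∪ iCl τ B :=
    Set.union_subset_union (subset_iCl τ A) (subset_iCl τ B)
  have heq : iCl τ (A ∪ B) = iCl τ A ∪ iCl τ B := by
    apply Set.Subset.antisymm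
    · exact iCl_subset τ _ _ hU hsub
    · apply Set.union_subset
      · exact fun x hx C hC => hx C ⟨hC.1, (Set.subset_union_left.trans hC.2)⟩
      · exact fun x hx C hC => hx C ⟨hC.1, (Set.subset_union_right.trans hC.2)⟩
  have hcg : CGenuine τ (A ∪ B) := by unfold CGenuine; rw [heq]; exact hU
  exact ⟨hcg, heq, hcg, subset_iCl τ _, fun C hC hAB => iCl_subset τ _ _ hC hAB⟩
end
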